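/- Let P^ℕ be the product probability measure on X^ℕ (i.i.d. coordinates with law P) and E[·] the integral with respect to P^ℕ. Fix θ₁ ∈ E and a stepsize η with 0 < η ≤ μ/(K·(M_V·(1 + s) + μ_G²)), define the iterates θ₁(ω) = θ₁ and θ_{i+1}(ω) = θ_i(ω) − η·g(ω_i, θ_i(ω)) for i ≥ 1, and assume for every i that ω ↦ L(θ_i(ω)) and ω ↦ ‖g(ω_i, θ_i(ω))‖² are integrable with respect to P^ℕ. Suppose further that there is a map v : E → H (the parameter-to-predicted-solution map) and a constant ε ≥ 0 such that for every θ ∈ E, ‖A v(θ) − f‖₂² + ‖B v(θ) − g‖₂² ≤ L(θ) + ε, and that ω ↦ ‖u* − v(θ_i(ω))‖₂² is measurable and integrable for every i. Then limsup_{i→∞} E[‖u* − v(θ_i)‖₂²] ≤ (2/C₁²) · ( η·K·C_V·s/(2·c·μ) + ε ). -/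

import Mathlib

open MeasureTheory ProbabilityTheory Filter
open scoped RealInnerProductSpace Gradient

open Topology

section Aux
variable {E : Type*} [NormedAddCommGroup E] [InnerProductSpace ℝ E] [CompleteSpace E]

theorem aux_hasDerivAt {L : E → ℝ} (hL : Differentiable ℝ L) (x v : E) (t : ℝ) :
    HasDerivAt (fun t : ℝ => L (x + t • v)) ⟪∇ L (x + t • v), v⟫ t := by
  have hc : HasDerivAt (fun t : ℝ => x + t • v) v t := by
    simpa using ((hasDerivAt_id t).smul_const v).const_add x
  have hf : HasFDerivAt L (InnerProductSpace.toDual ℝ E (∇ L (x + t • v))) (x + t • v) :=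
    hasGradientAt_iff_hasFDerivAt.mp (hL _).hasGradientAt
  exact hf.comp_hasDerivAt t hc

theorem aux_grad_lip_cont {L : E → ℝ} {K : ℝ} (hK : 0 < K)
    (hLip : ∀ a b : E, ‖∇ L a - ∇ L b‖ ≤ K * ‖a - b‖) : Continuous (∇ L) := by
  have : LipschitzWith (Real.toNNReal K) (∇ L) := by
    apply LipschitzWith.of_dist_le_mul
    intro a b
    simpa [dist_eq_norm, Real.coe_toNNReal K hK.le] using hLip a b
  exact this.continuous

theorem aux_descent {L : E → ℝ} (hL : Differentiable ℝ L) {K : ℝ} (hK : 0 < K)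
    (hLip : ∀ a b : E, ‖∇ L a - ∇ L b‖ ≤ K * ‖a - b‖) (x y : E) :
    L y ≤ L x + ⟪∇ L x, y - x⟫ + K / 2 * ‖y - x‖ ^ 2 := by
  set v := y - x with hv
  have hgc : Continuous (∇ L) := aux_grad_lip_cont hK hLip
  have hcont : Continuous fun t : ℝ => ⟪∇ L (x + t • v), v⟫ :=
    (Continuous.inner (hgc.comp (by continuity)) continuous_const)
  have hint : ∀ u w : ℝ, IntervalIntegrable (fun t : ℝ => ⟪∇ L (x + t • v), v⟫) MeasureTheory.volume u w :=
    fun u w => hcont.intervalIntegrable u w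
  have heq : L y - L x = ∫ t in (0:ℝ)..1, ⟪∇ L (x + t • v), v⟫ := by
    have := intervalIntegral.integral_eq_sub_of_hasDerivAt
      (f := fun t : ℝ => L (x + t • v)) (f' := fun t : ℝ => ⟪∇ L (x + t • v), v⟫)
      (a := 0) (b := 1) (fun t _ => aux_hasDerivAt hL x v t) (hint 0 1)
    rw [this]; simp [hv]
  have hbound : ∀ t ∈ Set.Icc (0:ℝ) 1,
      ⟪∇ L (x + t • v), v⟫ ≤ ⟪∇ L x, v⟫ + K * ‖v‖ ^ 2 * t := by
    intro t ht
    have h1 : ⟪∇ L (x + t • v) - ∇ L x, v⟫ ≤ K * ‖v‖ ^ 2 * t := by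
      calc ⟪∇ L (x + t • v) - ∇ L x, v⟫ ≤ ‖∇ L (x + t • v) - ∇ L x‖ * ‖v‖ :=
            real_inner_le_norm _ _
        _ ≤ (K * ‖x + t • v - x‖) * ‖v‖ :=
            mul_le_mul_of_nonneg_right (hLip _ _) (norm_nonneg v)
        _ = K * ‖v‖ ^ 2 * t := by
            simp [norm_smul, abs_of_nonneg ht.1]; ring
    have h2 := inner_sub_left (𝕜 := ℝ) (∇ L (x + t • v)) (∇ L x) v
    linarith [h2 ▸ h1]
  have hmono : (∫ t in (0:ℝ)..1, ⟪∇ L (x + t • v), v⟫)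
      ≤ ∫ t in (0:ℝ)..1, (⟪∇ L x, v⟫ + K * ‖v‖ ^ 2 * t) := by
    apply intervalIntegral.integral_mono_on (by norm_num) (hint 0 1)
    · exact (Continuous.intervalIntegrable (by continuity) 0 1)
    · exact hbound
  have hval : (∫ t in (0:ℝ)..1, (⟪∇ L x, v⟫ + K * ‖v‖ ^ 2 * t))
      = ⟪∇ L x, v⟫ + K / 2 * ‖v‖ ^ 2 := by
    rw [intervalIntegral.integral_add (intervalIntegrable_const)
      (Continuous.intervalIntegrable (by continuity) 0 1),
      intervalIntegral.integral_const_mul]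
    rw [integral_id]
    simp; ring
  have := heq.le.trans (hmono.trans hval.le)
  linarith

theorem aux_grad_sq {L : E → ℝ} (hL : Differentiable ℝ L) {K : ℝ} (hK : 0 < K)
    (hLip : ∀ a b : E, ‖∇ L a - ∇ L b‖ ≤ K * ‖a - b‖) (hL0 : ∀ θ : E, 0 ≤ L θ) (θ : E) :
    ‖∇ L θ‖ ^ 2 ≤ 2 * K * L θ := by
  have h := aux_descent hL hK hLip θ (θ - (1 / K) • ∇ L θ)
  have h1 : θ - (1 / K) • ∇ L θ - θ = -((1 / K) • ∇ L θ) := by abel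
  rw [h1] at h
  have h2 : ⟪∇ L θ, -((1 / K) • ∇ L θ)⟫ = -(1 / K) * ‖∇ L θ‖ ^ 2 := by
    rw [inner_neg_right, real_inner_smul_right, real_inner_self_eq_norm_sq]; ring
  have h3 : ‖-((1 / K) • ∇ L θ)‖ ^ 2 = (1 / K) ^ 2 * ‖∇ L θ‖ ^ 2 := by
    rw [norm_neg, norm_smul, mul_pow]
    congr 1
    rw [Real.norm_eq_abs, sq_abs]
  have h0 := hL0 (θ - (1 / K) • ∇ L θ)
  rw [h2, h3] at h
  have hKn : K ≠ 0 := hK.ne'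
  have hcomb : 0 ≤ L θ - 1 / (2 * K) * ‖∇ L θ‖ ^ 2 := by
    have : (-(1 / K)) * ‖∇ L θ‖ ^ 2 + K / 2 * ((1 / K) ^ 2 * ‖∇ L θ‖ ^ 2)
        = -(1 / (2 * K)) * ‖∇ L θ‖ ^ 2 := by field_simp; ring
    nlinarith [h, h0]
  have h2K : 0 < 2 * K := by linarith
  have key : 2 * K * (L θ - 1 / (2 * K) * ‖∇ L θ‖ ^ 2) = 2 * K * L θ - ‖∇ L θ‖ ^ 2 := by
    field_simp
  nlinarith [mul_le_mul_of_nonneg_left hcomb h2K.le, key]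

end Aux

noncomputable def iterSGD {X E : Type*} [AddCommGroup E] [Module ℝ E]
    (g : X × E → E) (η : ℝ) (θ₁ : E) : ℕ → (ℕ → X) → E
  | 0, _ => θ₁
  | 1, _ => θ₁
  | (n + 2), ω => iterSGD g η θ₁ (n + 1) ω - η • g (ω (n + 1), iterSGD g η θ₁ (n + 1) ω)

set_option maxHeartbeats 2000000

theorem pinn_sgd_error_limsup
    -- Parameter space: finite-dimensional real inner product space
    {E : Type*} [NormedAddCommGroup E] [InnerProductSpace ℝ E] [FiniteDimensional ℝ E] [MeasurableSpace E] [BorelSpace E]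
    -- Loss function: nonnegative, differentiable, Lipschitz gradient, 2c-PL* condition
    (L : E → ℝ) (hL0 : ∀ θ : E, 0 ≤ L θ) (hLdiff : Differentiable ℝ L)
    (K : ℝ) (hK : 0 < K)
    (hLip : ∀ θ₁ θ₂ : E, ‖∇ L θ₁ - ∇ L θ₂‖ ≤ K * ‖θ₁ - θ₂‖)
    (c : ℝ) (hc : 0 < c) (hPL : ∀ θ : E, 2 * c * L θ ≤ ‖∇ L θ‖ ^ 2)
    -- Stochastic gradient on a probability space
    {X : Type*} [MeasurableSpace X] (P : Measure X) [IsProbabilityMeasure P]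
    (g : X × E → E) (hgmeas : Measurable g)
    (hgInt : ∀ θ : E, Integrable (fun x => g (x, θ)) P)
    (hgSqInt : ∀ θ : E, Integrable (fun x => ‖g (x, θ)‖ ^ 2) P)
    -- constants
    (mu muG C_V M_V s : ℝ) (hmu : 0 < mu) (hmuG : 0 < muG)
    (hmu_le : mu ≤ Real.sqrt (K / c) * muG)
    (hCV : 0 ≤ C_V) (hMV : 0 ≤ M_V) (hs : 0 ≤ s)
    -- moment assumptions (i), (ii), (iii)
    (hmom1 : ∀ θ : E, mu * ‖∇ L θ‖ ^ 2 ≤ ⟪∇ L θ, ∫ x, g (x, θ) ∂P⟫)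
    (hmom2 : ∀ θ : E, ‖∫ x, g (x, θ) ∂P‖ ≤ muG * ‖∇ L θ‖)
    (hvar : ∀ θ : E, ∫ x, ‖g (x, θ)‖ ^ 2 ∂P - ‖∫ x, g (x, θ) ∂P‖ ^ 2
        ≤ C_V * s + M_V * (1 + s) * ‖∇ L θ‖ ^ 2)
    -- product measure on the sequence space with i.i.d. coordinates of law P
    (Pseq : Measure (ℕ → X)) [IsProbabilityMeasure Pseq]
    (hmap : ∀ i : ℕ, Pseq.map (fun ω => ω i) = P)
    (hiid : iIndepFun
      (fun (i : ℕ) (ω : ℕ → X) => ω i) Pseq)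
    -- fixed admissible stepsize and SGD iterates
    (η : ℝ) (hη0 : 0 < η) (hη : η ≤ mu / (K * (M_V * (1 + s) + muG ^ 2)))
    (θ₁ : E) (θiter : (ℕ → X) → ℕ → E)
    (hiter1 : ∀ ω : ℕ → X, θiter ω 1 = θ₁)
    (hiter : ∀ ω : ℕ → X, ∀ i ≥ 1, θiter ω (i + 1) = θiter ω i - η • g (ω i, θiter ω i))
    (hLint : ∀ i : ℕ, Integrable (fun ω => L (θiter ω i)) Pseq)
    (hgiter : ∀ i : ℕ, Integrable (fun ω => ‖g (ω i, θiter ω i)‖ ^ 2) Pseq)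
    -- PDE side: L² spaces, linear operators, stability bound and exact solution
    {Ω : Type*} [MeasurableSpace Ω] (μΩ : Measure Ω)
    {Γ : Type*} [MeasurableSpace Γ] (νΓ : Measure Γ)
    (A : Lp ℝ 2 μΩ →ₗ[ℝ] Lp ℝ 2 μΩ) (B : Lp ℝ 2 μΩ →ₗ[ℝ] Lp ℝ 2 νΓ)
    (C₁ : ℝ) (hC₁ : 0 < C₁)
    (hstab : ∀ u : Lp ℝ 2 μΩ, C₁ * ‖u‖ ≤ ‖A u‖ + ‖B u‖)
    (f : Lp ℝ 2 μΩ) (gb : Lp ℝ 2 νΓ) (ustar : Lp ℝ 2 μΩ)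
    (hA : A ustar = f) (hB : B ustar = gb)
    -- parameter-to-predicted-solution map, controlled by the loss up to error ε
    (v : E → Lp ℝ 2 μΩ) (ε : ℝ) (hε : 0 ≤ ε)
    (hloss : ∀ θ : E, ‖A (v θ) - f‖ ^ 2 + ‖B (v θ) - gb‖ ^ 2 ≤ L θ + ε)
    (hvint : ∀ i : ℕ, Integrable (fun ω => ‖ustar - v (θiter ω i)‖ ^ 2) Pseq) :
    limsup (fun i => ∫ ω, ‖ustar - v (θiter ω i)‖ ^ 2 ∂Pseq) atTop ≤
      2 / C₁ ^ 2 * (η * K * C_V * s / (2 * c * mu) + ε) := by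
  classical
  have hXseq : Nonempty (ℕ → X) := by
    by_contra h
    rw [not_nonempty_iff] at h
    have h1 := measure_univ (μ := Pseq)
    rw [Set.univ_eq_empty_iff.mpr h] at h1
    simp at h1
  obtain ⟨ω₀⟩ := hXseq
  set it : ℕ → (ℕ → X) → E := iterSGD g η θ₁ with hitdef
  have hit1 : ∀ ω, it 1 ω = θ₁ := fun _ => rfl
  have hit2 : ∀ n ω, it (n + 2) ω = it (n + 1) ω - η • g (ω (n + 1), it (n + 1) ω) :=
    fun _ _ => rfl
  have hitθ : ∀ i, 1 ≤ i → ∀ ω, θiter ω i = it i ω := by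
    intro i
    induction i with
    | zero => omega
    | succ n ih =>
      intro _ ω
      cases n with
      | zero => exact (hiter1 ω).trans (hit1 ω).symm
      | succ m =>
        rw [hiter ω (m + 1) (by omega), hit2 m ω, ih (by omega) ω]
  have hmeasit : ∀ i, Measurable (it i) := by
    intro i
    induction i with
    | zero => exact measurable_const
    | succ n ih =>
      cases n with
      | zero => exact measurable_const
      | succ m =>
        exact ih.sub ((hgmeas.comp ((measurable_pi_apply (m + 1)).prodMk ih)).const_smul η)
  have hcongr : ∀ i (ω ω' : ℕ → X), (∀ j, 1 ≤ j → j < i → ω j = ω' j) → it i ω = it i ω' := by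
    intro i
    induction i with
    | zero => intro ω ω' _; rfl
    | succ n ih =>
      intro ω ω' hagree
      cases n with
      | zero => rfl
      | succ m =>
        rw [hit2 m ω, hit2 m ω', ih ω ω' (fun j h1 h2 => hagree j h1 (by omega)),
          hagree (m + 1) (by omega) (by omega)]
  have hindep : ∀ i : ℕ, IndepFun (fun ω => ω i) (it i) Pseq := by
    intro i
    have hdisj : Disjoint ({i} : Finset ℕ) (Finset.Ico 1 i) := by
      simp [Finset.disjoint_singleton_left]
    have h0 := hiid.indepFun_finset ({i} : Finset ℕ) (Finset.Ico 1 i) hdisj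
      (fun j => measurable_pi_apply j)
    set ext : ((Finset.Ico 1 i : Finset ℕ) → X) → (ℕ → X) :=
      fun y j => if h : j ∈ Finset.Ico 1 i then y ⟨j, h⟩ else ω₀ j with hext
    have hextmeas : Measurable ext := by
      apply measurable_pi_lambda
      intro j
      by_cases h : j ∈ Finset.Ico 1 i
      · have heq : (fun y : ((Finset.Ico 1 i : Finset ℕ) → X) => ext y j) = fun y => y ⟨j, h⟩ := by
          funext y; simp only [hext]; rw [dif_pos h]
        rw [heq]; exact measurable_pi_apply _
      · have heq : (fun y : ((Finset.Ico 1 i : Finset ℕ) → X) => ext y j) = fun _ => ω₀ j := by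
          funext y; simp only [hext]; rw [dif_neg h]
        rw [heq]; exact measurable_const
    have hφ : Measurable fun y : ({i} : Finset ℕ) → X => y ⟨i, Finset.mem_singleton_self i⟩ :=
      measurable_pi_apply _
    have hψ : Measurable fun y : ((Finset.Ico 1 i : Finset ℕ) → X) => it i (ext y) :=
      (hmeasit i).comp hextmeas
    have hcomp := h0.comp hφ hψ
    have heq2 : ((fun y : ((Finset.Ico 1 i : Finset ℕ) → X) => it i (ext y)) ∘
        (fun ω (j : (Finset.Ico 1 i : Finset ℕ)) => ω (j : ℕ))) = it i := by
      funext ω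
      exact hcongr i _ ω (fun j h1 h2 => by
        simp only [hext, Function.comp]
        rw [dif_pos (Finset.mem_Ico.mpr ⟨h1, h2⟩)])
    rw [heq2] at hcomp
    exact hcomp
  have hlaw : ∀ i, Pseq.map (fun ω => (ω i, it i ω)) = P.prod (Pseq.map (it i)) := by
    intro i
    have h := (indepFun_iff_map_prod_eq_prod_map_map
      (measurable_pi_apply i).aemeasurable (hmeasit i).aemeasurable).mp (hindep i)
    rw [h, hmap i]
  have hprob : ∀ i, IsProbabilityMeasure (Pseq.map (it i)) :=
    fun i => Measure.isProbabilityMeasure_map (hmeasit i).aemeasurable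
  have key : ∀ (i : ℕ) (φ : X × E → ℝ), Measurable φ →
      Integrable (fun ω => φ (ω i, it i ω)) Pseq →
      ((∫ ω, φ (ω i, it i ω) ∂Pseq) = ∫ ω, ∫ x, φ (x, it i ω) ∂P ∂Pseq ∧
        Integrable (fun ω => ∫ x, φ (x, it i ω) ∂P) Pseq) := by
    intro i φ hφ hφint
    haveI := hprob i
    have hpm : Measurable fun ω => (ω i, it i ω) := (measurable_pi_apply i).prodMk (hmeasit i)
    have hmapped : Integrable φ (Pseq.map fun ω => (ω i, it i ω)) :=
      (integrable_map_measure hφ.aestronglyMeasurable hpm.aemeasurable).mpr hφint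
    have hprod : Integrable φ (P.prod (Pseq.map (it i))) := by rwa [hlaw i] at hmapped
    have hsm : StronglyMeasurable fun θ => ∫ x, φ (x, θ) ∂P :=
      hφ.stronglyMeasurable.integral_prod_left'
    constructor
    · calc ∫ ω, φ (ω i, it i ω) ∂Pseq
          = ∫ p, φ p ∂(Pseq.map fun ω => (ω i, it i ω)) :=
            (integral_map hpm.aemeasurable hφ.aestronglyMeasurable).symm
        _ = ∫ p, φ p ∂(P.prod (Pseq.map (it i))) := by rw [hlaw i]
        _ = ∫ θ, ∫ x, φ (x, θ) ∂P ∂(Pseq.map (it i)) := integral_prod_symm φ hprod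
        _ = ∫ ω, ∫ x, φ (x, it i ω) ∂P ∂Pseq :=
            integral_map (hmeasit i).aemeasurable hsm.aestronglyMeasurable
    · have h2 : Integrable (fun θ => ∫ x, φ (x, θ) ∂P) (Pseq.map (it i)) :=
        hprod.integral_prod_right
      exact (integrable_map_measure h2.aestronglyMeasurable (hmeasit i).aemeasurable).mp h2
  -- constants
  set D := M_V * (1 + s) + muG ^ 2 with hD
  have hMVs : 0 ≤ M_V * (1 + s) := mul_nonneg hMV (by linarith)
  have hDpos : 0 < D := by rw [hD]; positivity
  have hKD : 0 < K * D := mul_pos hK hDpos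
  have hηKD : η * (K * D) ≤ mu := (le_div_iff₀ hKD).mp hη
  have hmusq : c * mu ^ 2 ≤ K * muG ^ 2 := by
    have h1 : mu ^ 2 ≤ (Real.sqrt (K / c) * muG) ^ 2 := pow_le_pow_left₀ hmu.le hmu_le 2
    rw [mul_pow, Real.sq_sqrt (by positivity)] at h1
    have h2 := mul_le_mul_of_nonneg_left h1 hc.le
    have h3 : c * (K / c * muG ^ 2) = K * muG ^ 2 := by field_simp
    linarith
  have hemc : η * mu * c ≤ 1 := by
    have h4 : K * muG ^ 2 ≤ K * D := by rw [hD]; nlinarith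
    have h5 : η * (c * mu ^ 2) ≤ η * (K * D) :=
      mul_le_mul_of_nonneg_left (hmusq.trans h4) hη0.le
    have h6 : η * (c * mu ^ 2) ≤ mu := h5.trans hηKD
    have h7 : (η * mu * c) * mu ≤ 1 * mu := by nlinarith
    exact le_of_mul_le_mul_right h7 hmu
  set r := 1 - η * mu * c with hr
  have hr0 : 0 ≤ r := by rw [hr]; linarith
  have hr1 : r < 1 := by
    have : 0 < η * mu * c := by positivity
    rw [hr]; linarith
  set F := η * K * C_V * s / (2 * c * mu) with hF
  set bconst := η ^ 2 * K * C_V * s / 2 with hb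
  have hFfix : r * F + bconst = F := by
    rw [hr, hF, hb]; field_simp; ring
  -- quantities
  set J : ℕ → ℝ := fun i => ∫ ω, ‖∇ L (it i ω)‖ ^ 2 ∂Pseq with hJ
  set a : ℕ → ℝ := fun i => ∫ ω, L (it i ω) ∂Pseq with ha
  have hGm : Measurable (∇ L) := (aux_grad_lip_cont hK hLip).measurable
  have hfeqL : ∀ i, 1 ≤ i → (fun ω => L (θiter ω i)) = fun ω => L (it i ω) :=
    fun i hi => funext fun ω => by rw [hitθ i hi ω]
  have hLi : ∀ i, 1 ≤ i → Integrable (fun ω => L (it i ω)) Pseq := by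
    intro i hi; have := hLint i; rwa [hfeqL i hi] at this
  have hgi : ∀ i, 1 ≤ i → Integrable (fun ω => ‖g (ω i, it i ω)‖ ^ 2) Pseq := by
    intro i hi; have := hgiter i
    rwa [show (fun ω => ‖g (ω i, θiter ω i)‖ ^ 2) = fun ω => ‖g (ω i, it i ω)‖ ^ 2 from
      funext fun ω => by rw [hitθ i hi ω]] at this
  have hJm : ∀ i, Measurable fun ω => ‖∇ L (it i ω)‖ ^ 2 :=
    fun i => (hGm.comp (hmeasit i)).norm.pow_const 2
  have hJi : ∀ i, 1 ≤ i → Integrable (fun ω => ‖∇ L (it i ω)‖ ^ 2) Pseq := by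
    intro i hi
    refine Integrable.mono' ((hLi i hi).const_mul (2 * K)) (hJm i).aestronglyMeasurable
      (ae_of_all _ fun ω => ?_)
    rw [Real.norm_eq_abs, abs_of_nonneg (by positivity)]
    exact aux_grad_sq hLdiff hK hLip hL0 _
  have hJnn : ∀ i, 0 ≤ J i := fun i => integral_nonneg fun ω => by positivity
  have hJ2c : ∀ i, 1 ≤ i → 2 * c * a i ≤ J i := by
    intro i hi
    have h := integral_mono ((hLi i hi).const_mul (2 * c)) (hJi i hi)
      (fun ω => hPL (it i ω))
    rwa [integral_const_mul] at h
  have hinm : ∀ i, Measurable fun ω => ⟪∇ L (it i ω), g (ω i, it i ω)⟫ := fun i =>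
    (hGm.comp (hmeasit i)).inner (hgmeas.comp ((measurable_pi_apply i).prodMk (hmeasit i)))
  have hinneri : ∀ i, 1 ≤ i → Integrable (fun ω => ⟪∇ L (it i ω), g (ω i, it i ω)⟫) Pseq := by
    intro i hi
    refine Integrable.mono' (((hLi i hi).const_mul K).add ((hgi i hi).const_mul (1 / 2)))
      (hinm i).aestronglyMeasurable (ae_of_all _ fun ω => ?_)
    have h1 := abs_real_inner_le_norm (∇ L (it i ω)) (g (ω i, it i ω))
    have h2 := aux_grad_sq hLdiff hK hLip hL0 (it i ω)
    have h3 : ‖∇ L (it i ω)‖ * ‖g (ω i, it i ω)‖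
        ≤ K * L (it i ω) + 1 / 2 * ‖g (ω i, it i ω)‖ ^ 2 := by
      nlinarith [sq_nonneg (‖∇ L (it i ω)‖ - ‖g (ω i, it i ω)‖)]
    simp only [Pi.add_apply]
    rw [Real.norm_eq_abs]
    linarith
  -- moment bounds
  have hφ1 : Measurable fun p : X × E => ⟪∇ L p.2, g p⟫ :=
    (hGm.comp measurable_snd).inner hgmeas
  have hI1 : ∀ i, 1 ≤ i →
      mu * J i ≤ ∫ ω, ⟪∇ L (it i ω), g (ω i, it i ω)⟫ ∂Pseq := by
    intro i hi
    obtain ⟨heqq, hintq⟩ := key i _ hφ1 (hinneri i hi)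
    rw [heqq]
    have hpt : ∀ ω, mu * ‖∇ L (it i ω)‖ ^ 2
        ≤ ∫ x, ⟪∇ L (it i ω), g (x, it i ω)⟫ ∂P := by
      intro ω
      rw [integral_inner (hgInt (it i ω)) (∇ L (it i ω))]
      exact hmom1 (it i ω)
    have h := integral_mono ((hJi i hi).const_mul mu) hintq hpt
    rwa [integral_const_mul] at h
  have hI2 : ∀ i, 1 ≤ i →
      (∫ ω, ‖g (ω i, it i ω)‖ ^ 2 ∂Pseq) ≤ C_V * s + D * J i := by
    intro i hi
    have hφ2 : Measurable fun p : X × E => ‖g p‖ ^ 2 := hgmeas.norm.pow_const 2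
    obtain ⟨heqq, hintq⟩ := key i _ hφ2 (hgi i hi)
    rw [heqq]
    have hpt : ∀ ω, (∫ x, ‖g (x, it i ω)‖ ^ 2 ∂P)
        ≤ C_V * s + D * ‖∇ L (it i ω)‖ ^ 2 := by
      intro ω
      have h1 := hvar (it i ω)
      have h2 := hmom2 (it i ω)
      have h3 : ‖∫ x, g (x, it i ω) ∂P‖ ^ 2 ≤ muG ^ 2 * ‖∇ L (it i ω)‖ ^ 2 := by
        nlinarith [norm_nonneg (∫ x, g (x, it i ω) ∂P), norm_nonneg (∇ L (it i ω))]
      rw [hD]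
      nlinarith
    have hcint : Integrable (fun _ : ℕ → X => C_V * s) Pseq := integrable_const _
    have hdint : Integrable (fun ω => D * ‖∇ L (it i ω)‖ ^ 2) Pseq :=
      (hJi i hi).const_mul D
    have h := integral_mono hintq (hcint.add hdint) hpt
    simp only [Pi.add_apply] at h
    rwa [integral_add hcint hdint, integral_const,
      integral_const_mul, probReal_univ, smul_eq_mul, one_mul] at h
  -- descent recursion
  have hrec : ∀ i, 1 ≤ i → a (i + 1) ≤ r * a i + bconst := by
    intro i hi
    obtain ⟨m, rfl⟩ : ∃ m, i = m + 1 := ⟨i - 1, by omega⟩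
    have hpt : ∀ ω, L (it (m + 2) ω) ≤ L (it (m + 1) ω)
        - η * ⟪∇ L (it (m + 1) ω), g (ω (m + 1), it (m + 1) ω)⟫
        + K / 2 * η ^ 2 * ‖g (ω (m + 1), it (m + 1) ω)‖ ^ 2 := by
      intro ω
      have hd := aux_descent hLdiff hK hLip (it (m + 1) ω) (it (m + 2) ω)
      have hsub : it (m + 2) ω - it (m + 1) ω = -(η • g (ω (m + 1), it (m + 1) ω)) := by
        rw [hit2 m ω]; abel
      rw [hsub] at hd
      have hin : ⟪∇ L (it (m + 1) ω), -(η • g (ω (m + 1), it (m + 1) ω))⟫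
          = -(η * ⟪∇ L (it (m + 1) ω), g (ω (m + 1), it (m + 1) ω)⟫) := by
        rw [inner_neg_right, real_inner_smul_right]
      have hnr : ‖-(η • g (ω (m + 1), it (m + 1) ω))‖ ^ 2
          = η ^ 2 * ‖g (ω (m + 1), it (m + 1) ω)‖ ^ 2 := by
        rw [norm_neg, norm_smul, mul_pow, Real.norm_eq_abs, sq_abs]
      rw [hin, hnr] at hd
      linarith
    have hsint : Integrable (fun ω => L (it (m + 1) ω)
        - η * ⟪∇ L (it (m + 1) ω), g (ω (m + 1), it (m + 1) ω)⟫) Pseq :=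
      (hLi (m + 1) (by omega)).sub ((hinneri (m + 1) (by omega)).const_mul η)
    have hqint : Integrable
        (fun ω => K / 2 * η ^ 2 * ‖g (ω (m + 1), it (m + 1) ω)‖ ^ 2) Pseq :=
      (hgi (m + 1) (by omega)).const_mul _
    have hstep : a (m + 2) ≤ a (m + 1)
        - η * (∫ ω, ⟪∇ L (it (m + 1) ω), g (ω (m + 1), it (m + 1) ω)⟫ ∂Pseq)
        + K / 2 * η ^ 2 * (∫ ω, ‖g (ω (m + 1), it (m + 1) ω)‖ ^ 2 ∂Pseq) := by
      have h := integral_mono (hLi (m + 2) (by omega)) (hsint.add hqint) hpt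
      simp only [Pi.add_apply, Pi.sub_apply] at h
      rwa [integral_add hsint hqint,
        integral_sub (hLi (m + 1) (by omega)) ((hinneri (m + 1) (by omega)).const_mul η),
        integral_const_mul, integral_const_mul] at h
    have h1 := hI1 (m + 1) (by omega)
    have h2 := hI2 (m + 1) (by omega)
    have e1 : η * (mu * J (m + 1))
        ≤ η * (∫ ω, ⟪∇ L (it (m + 1) ω), g (ω (m + 1), it (m + 1) ω)⟫ ∂Pseq) :=
      mul_le_mul_of_nonneg_left h1 hη0.le
    have e2 : K / 2 * η ^ 2 * (∫ ω, ‖g (ω (m + 1), it (m + 1) ω)‖ ^ 2 ∂Pseq)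
        ≤ K / 2 * η ^ 2 * (C_V * s + D * J (m + 1)) :=
      mul_le_mul_of_nonneg_left h2 (by positivity)
    have e3 : K / 2 * η ^ 2 * (D * J (m + 1)) ≤ η * mu / 2 * J (m + 1) := by
      have h5 : 0 ≤ (mu - η * (K * D)) * (η * J (m + 1) / 2) :=
        mul_nonneg (by linarith) (by
          have := hJnn (m + 1)
          positivity)
      nlinarith
    have e4 : η * mu / 2 * (2 * c * a (m + 1)) ≤ η * mu / 2 * J (m + 1) :=
      mul_le_mul_of_nonneg_left (hJ2c (m + 1) (by omega)) (by positivity)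
    show a (m + 1 + 1) ≤ r * a (m + 1) + bconst
    rw [hr, hb]
    nlinarith [hstep, e1, e2, e3, e4]
  -- iterate the recursion
  have hiterate : ∀ n : ℕ, a (n + 1) ≤ F + r ^ n * (a 1 - F) := by
    intro n
    induction n with
    | zero => simp
    | succ m ih =>
      have h := hrec (m + 1) (by omega)
      have h2 : r * a (m + 1) ≤ r * (F + r ^ m * (a 1 - F)) :=
        mul_le_mul_of_nonneg_left ih hr0
      calc a (m + 1 + 1) ≤ r * a (m + 1) + bconst := h
        _ ≤ r * (F + r ^ m * (a 1 - F)) + bconst := by linarith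
        _ = (r * F + bconst) + r ^ (m + 1) * (a 1 - F) := by ring
        _ = F + r ^ (m + 1) * (a 1 - F) := by rw [hFfix]
  -- deterministic PDE bound
  have hdet : ∀ θ : E, ‖ustar - v θ‖ ^ 2 ≤ 2 / C₁ ^ 2 * (L θ + ε) := by
    intro θ
    have h1 : C₁ * ‖ustar - v θ‖ ≤ ‖A (v θ) - f‖ + ‖B (v θ) - gb‖ := by
      have h := hstab (ustar - v θ)
      rw [map_sub, map_sub, hA, hB, norm_sub_rev f (A (v θ)), norm_sub_rev gb (B (v θ))] at h
      exact h
    have h2 : (C₁ * ‖ustar - v θ‖) ^ 2 ≤ (‖A (v θ) - f‖ + ‖B (v θ) - gb‖) ^ 2 :=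
      pow_le_pow_left₀ (by positivity) h1 2
    have h3 := hloss θ
    have h4 : C₁ ^ 2 * ‖ustar - v θ‖ ^ 2 ≤ 2 * (L θ + ε) := by
      nlinarith [sq_nonneg (‖A (v θ) - f‖ - ‖B (v θ) - gb‖)]
    rw [div_mul_eq_mul_div, le_div_iff₀ (by positivity : (0:ℝ) < C₁ ^ 2)]
    nlinarith [h4]
  have hbnd : ∀ i, 1 ≤ i →
      (∫ ω, ‖ustar - v (θiter ω i)‖ ^ 2 ∂Pseq) ≤ 2 / C₁ ^ 2 * (a i + ε) := by
    intro i hi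
    have haint : Integrable (fun ω => L (θiter ω i) + ε) Pseq :=
      (hLint i).add (integrable_const ε)
    have h := integral_mono (hvint i) (haint.const_mul (2 / C₁ ^ 2))
      (fun ω => hdet (θiter ω i))
    rw [integral_const_mul, integral_add (hLint i) (integrable_const ε), integral_const,
      probReal_univ, smul_eq_mul, one_mul] at h
    rwa [show (∫ ω, L (θiter ω i) ∂Pseq) = a i from by rw [hfeqL i hi]] at h
  -- pass to the limit
  set T := 2 / C₁ ^ 2 * (F + ε) with hT
  have hM : Tendsto (fun i : ℕ => 2 / C₁ ^ 2 * ((F + r ^ (i - 1) * (a 1 - F)) + ε))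
      atTop (𝓝 T) := by
    have hrpow : Tendsto (fun n : ℕ => r ^ n) atTop (𝓝 0) :=
      tendsto_pow_atTop_nhds_zero_of_lt_one hr0 hr1
    have h2 : Tendsto (fun i : ℕ => r ^ (i - 1)) atTop (𝓝 0) :=
      hrpow.comp (tendsto_sub_atTop_nat 1)
    have h3 : Tendsto (fun i : ℕ => (F + r ^ (i - 1) * (a 1 - F)) + ε)
        atTop (𝓝 ((F + 0 * (a 1 - F)) + ε)) :=
      (tendsto_const_nhds.add (h2.mul_const _)).add tendsto_const_nhds
    have h4 := h3.const_mul (2 / C₁ ^ 2)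
    rw [hT]
    simpa using h4
  have hble : ∀ᶠ i in atTop, (∫ ω, ‖ustar - v (θiter ω i)‖ ^ 2 ∂Pseq)
      ≤ 2 / C₁ ^ 2 * ((F + r ^ (i - 1) * (a 1 - F)) + ε) := by
    filter_upwards [eventually_ge_atTop 1] with i hi
    have h1 := hbnd i hi
    have h2 : a i ≤ F + r ^ (i - 1) * (a 1 - F) := by
      have h := hiterate (i - 1)
      rwa [show i - 1 + 1 = i from by omega] at h
    refine h1.trans ?_
    apply mul_le_mul_of_nonneg_left (by linarith) (by positivity)
  have hcb : IsCoboundedUnder (· ≤ ·) atTop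
      (fun i => ∫ ω, ‖ustar - v (θiter ω i)‖ ^ 2 ∂Pseq) := by
    apply Filter.IsBoundedUnder.isCoboundedUnder_le
    exact ⟨0, eventually_map.mpr (Eventually.of_forall fun i =>
      integral_nonneg fun ω => by positivity)⟩
  have hbM : IsBoundedUnder (· ≤ ·) atTop
      (fun i : ℕ => 2 / C₁ ^ 2 * ((F + r ^ (i - 1) * (a 1 - F)) + ε)) :=
    hM.isBoundedUnder_le
  calc limsup (fun i => ∫ ω, ‖ustar - v (θiter ω i)‖ ^ 2 ∂Pseq) atTop
      ≤ limsup (fun i : ℕ => 2 / C₁ ^ 2 * ((F + r ^ (i - 1) * (a 1 - F)) + ε)) atTop :=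
        limsup_le_limsup hble hcb hbM
    _ = T := hM.limsup_eq
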